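/- Let n ≥ 1 and m ≥ 2 be integers and let s > 0, B > 0 and ξ ∈ ℝ. Then (2π^{(m−1)/2}/Γ((m−1)/2)) ∫_{|ξ|}^∞ (B + 16r²)^{−(n+m+s)/2} (r² − ξ²)^{(m−3)/2} r dr = (π^{(m−1)/2}/4^{m−1}) (Γ((n+1+s)/2)/Γ((n+m+s)/2)) (B + 16ξ²)^{−(n+1+s)/2}. (With B = (ρ² + |x|² + |u|²)², this says that the partial Radon transform in the central variable of the H-type kernel ((ρ²+|x|²+|u|²)² + 16|t|²)^{−(n+m+s)/2}, t ∈ ℝᵐ, equals a constant multiple of the Heisenberg kernel ((ρ²+|x|²+|u|²)² + 16ξ²)^{−(n+1+s)/2}.) -/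

import Mathlib

open MeasureTheory


lemma real_beta {a b : ℝ} (ha : 0 < a) (hb : 0 < b) :
    ∫ x in Set.Ioo (0:ℝ) 1, x ^ (a-1) * (1-x) ^ (b-1)
      = Real.Gamma a * Real.Gamma b / Real.Gamma (a+b) := by
  have h := Complex.Gamma_mul_Gamma_eq_betaIntegral (s := (a:ℂ)) (t := (b:ℂ))
    (by simpa using ha) (by simpa using hb)
  have hIcc : ∀ x ∈ Set.uIcc (0:ℝ) 1,
      ((fun x : ℝ => ((x ^ (a-1) * (1-x) ^ (b-1) : ℝ) : ℂ)) x)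
        = (x:ℂ) ^ ((a:ℂ)-1) * ((1:ℂ)-x) ^ ((b:ℂ)-1) := by
    intro x hx
    rw [Set.uIcc_of_le zero_le_one] at hx
    simp only []
    rw [Complex.ofReal_mul, Complex.ofReal_cpow hx.1,
      Complex.ofReal_cpow (by linarith [hx.2] : (0:ℝ) ≤ 1-x)]
    push_cast
    ring
  have hbeta : Complex.betaIntegral a b
      = ((∫ x in (0:ℝ)..1, x ^ (a-1) * (1-x) ^ (b-1) : ℝ) : ℂ) := by
    rw [Complex.betaIntegral, ← intervalIntegral.integral_ofReal]
    exact (intervalIntegral.integral_congr hIcc).symm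
  rw [hbeta, ← Complex.ofReal_add, Complex.Gamma_ofReal, Complex.Gamma_ofReal,
    Complex.Gamma_ofReal, ← Complex.ofReal_mul, ← Complex.ofReal_mul] at h
  have h' := Complex.ofReal_injective h
  have hG : Real.Gamma (a+b) ≠ 0 := (Real.Gamma_pos_of_pos (by linarith)).ne'
  have : ∫ x in (0:ℝ)..1, x ^ (a-1) * (1-x) ^ (b-1)
      = Real.Gamma a * Real.Gamma b / Real.Gamma (a+b) := by
    field_simp
    linarith [h']
  rw [← this, intervalIntegral.integral_of_le zero_le_one,
    MeasureTheory.integral_Ioc_eq_integral_Ioo]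

lemma beta_Ioi {A p q : ℝ} (hA : 0 < A) (hq : 0 < q) (hpq : 0 < p - q) :
    ∫ u in Set.Ioi (0:ℝ), (A + 16*u) ^ (-p) * u ^ (q-1)
      = A ^ (q-p) * 16 ^ (-q) * (Real.Gamma (p-q) * Real.Gamma q / Real.Gamma p) := by
  set f : ℝ → ℝ := fun x => (A/16) * (x⁻¹ - 1) with hf
  have hA16 : 0 < A/16 := by positivity
  have hderiv : ∀ x ∈ Set.Ioo (0:ℝ) 1,
      HasDerivWithinAt f (-(A/16) / x^2) (Set.Ioo (0:ℝ) 1) x := by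
    intro x hx
    have hx0 : x ≠ 0 := hx.1.ne'
    have h2 : HasDerivAt f ((A/16) * (-(x^2)⁻¹)) x := by
      exact ((hasDerivAt_inv hx0).sub_const 1).const_mul (A/16)
    have h3 : (A/16) * (-(x^2)⁻¹) = -(A/16) / x^2 := by field_simp
    rw [h3] at h2
    exact h2.hasDerivWithinAt
  have hinj : Set.InjOn f (Set.Ioo (0:ℝ) 1) := by
    have : StrictAntiOn f (Set.Ioo (0:ℝ) 1) := by
      intro x hx y hy hxy
      have hlt : y⁻¹ < x⁻¹ := by
        rw [inv_lt_inv₀ hy.1 hx.1]; exact hxy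
      simp only [hf]
      exact (mul_lt_mul_iff_right₀ hA16).mpr (by linarith)
    exact this.injOn
  have himg : f '' (Set.Ioo (0:ℝ) 1) = Set.Ioi (0:ℝ) := by
    ext u
    constructor
    · rintro ⟨x, hx, rfl⟩
      have : 1 < x⁻¹ := (one_lt_inv₀ hx.1).mpr hx.2
      exact mul_pos hA16 (by linarith)
    · intro hu
      have hu' : 0 < u := hu
      refine ⟨A / (A + 16*u), ⟨by positivity, ?_⟩, ?_⟩
      · rw [div_lt_one (by linarith)]; linarith
      · simp only [hf, inv_div]
        field_simp
        ring
  have key := integral_image_eq_integral_abs_deriv_smul measurableSet_Ioo hderiv hinj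
    (fun u => (A + 16*u) ^ (-p) * u ^ (q-1))
  rw [himg] at key
  rw [key]
  have h16 : (0:ℝ) < 16 := by norm_num
  have congr1 : ∀ x ∈ Set.Ioo (0:ℝ) 1,
      |(-(A/16) / x^2)| • ((A + 16*(f x)) ^ (-p) * (f x) ^ (q-1))
        = (A ^ (q-p) * 16 ^ (-q)) * (x ^ ((p-q)-1) * (1-x) ^ (q-1)) := by
    intro x hx
    have hx0 : 0 < x := hx.1
    have hx1 : x < 1 := hx.2
    have h1x : 0 < 1 - x := by linarith
    have hfx : f x = (A/16) * ((1-x)/x) := by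
      simp only [hf]; field_simp
    have hAfx : A + 16 * f x = A / x := by
      simp only [hf]; field_simp; ring
    rw [smul_eq_mul, hAfx, hfx,
      abs_div, abs_neg, abs_of_pos hA16, abs_of_pos (by positivity : (0:ℝ) < x^2)]
    set L := Real.log
    have e1 : (A/16)/x^2 = Real.exp (L A - L 16 - 2 * L x) := by
      rw [← Real.exp_log (show (0:ℝ) < (A/16)/x^2 by positivity)]
      congr 1
      rw [Real.log_div (by positivity) (by positivity),
        Real.log_div hA.ne' (by norm_num), Real.log_pow]
      push_cast; ring
    have e2 : (A/x) ^ (-p) = Real.exp ((L A - L x) * (-p)) := by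
      rw [Real.rpow_def_of_pos (by positivity), Real.log_div hA.ne' hx0.ne']
    have e3 : ((A/16) * ((1-x)/x)) ^ (q-1)
        = Real.exp ((L A - L 16 + (L (1-x) - L x)) * (q-1)) := by
      rw [Real.rpow_def_of_pos (by positivity),
        Real.log_mul (by positivity) (by positivity),
        Real.log_div hA.ne' (by norm_num), Real.log_div h1x.ne' hx0.ne']
    have e4 : A ^ (q-p) = Real.exp (L A * (q-p)) := Real.rpow_def_of_pos hA _
    have e5 : (16:ℝ) ^ (-q) = Real.exp (L 16 * (-q)) := Real.rpow_def_of_pos h16 _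
    have e6 : x ^ ((p-q)-1) = Real.exp (L x * ((p-q)-1)) := Real.rpow_def_of_pos hx0 _
    have e7 : (1-x) ^ (q-1) = Real.exp (L (1-x) * (q-1)) := Real.rpow_def_of_pos h1x _
    rw [e1, e2, e3, e4, e5, e6, e7]
    simp only [← Real.exp_add]
    congr 1
    ring
  rw [setIntegral_congr_fun measurableSet_Ioo congr1, integral_const_mul,
    real_beta hpq hq]
  have : p - q + q = p := by ring
  rw [this]

lemma radial_sub (ξ : ℝ) (g : ℝ → ℝ) :
    ∫ u in Set.Ioi (0:ℝ), g u = ∫ r in Set.Ioi |ξ|, (2*r) * g (r^2 - ξ^2) := by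
  have hderiv : ∀ r ∈ Set.Ioi |ξ|,
      HasDerivWithinAt (fun r : ℝ => r^2 - ξ^2) (2*r) (Set.Ioi |ξ|) r := by
    intro r _
    have : HasDerivAt (fun r : ℝ => r^2 - ξ^2) (2*r) r := by
      simpa using ((hasDerivAt_pow 2 r).sub_const (ξ^2))
    exact this.hasDerivWithinAt
  have hinj : Set.InjOn (fun r : ℝ => r^2 - ξ^2) (Set.Ioi |ξ|) := by
    intro x hx y hy hxy
    have hx0 : 0 ≤ x := le_trans (abs_nonneg ξ) (le_of_lt hx)
    have hy0 : 0 ≤ y := le_trans (abs_nonneg ξ) (le_of_lt hy)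
    have : x^2 = y^2 := by simp only at hxy; linarith
    nlinarith
  have himg : (fun r : ℝ => r^2 - ξ^2) '' (Set.Ioi |ξ|) = Set.Ioi (0:ℝ) := by
    ext u
    constructor
    · rintro ⟨r, hr, rfl⟩
      have hr' : |ξ| < r := hr
      have : ξ^2 < r^2 := by rw [← sq_abs ξ]; nlinarith [abs_nonneg ξ]
      exact sub_pos.mpr this
    · intro hu
      have hu' : 0 < u := hu
      refine ⟨Real.sqrt (u + ξ^2), ?_, ?_⟩
      · have h1 : |ξ| = Real.sqrt (ξ^2) := (Real.sqrt_sq_eq_abs ξ).symm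
        rw [Set.mem_Ioi, h1]
        exact Real.sqrt_lt_sqrt (sq_nonneg ξ) (by linarith)
      · simp only
        rw [Real.sq_sqrt (by positivity)]
        ring
  have key := integral_image_eq_integral_abs_deriv_smul measurableSet_Ioi hderiv hinj g
  rw [himg] at key
  rw [key]
  refine setIntegral_congr_fun measurableSet_Ioi fun r hr => ?_
  have : 0 ≤ r := le_trans (abs_nonneg ξ) (le_of_lt hr)
  rw [smul_eq_mul, abs_of_nonneg (by linarith : (0:ℝ) ≤ 2*r)]

/-- the Abel-type integral identity expressing the partial Radon transform
of the H-type kernel as a constant multiple of the Heisenberg kernel. -/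
theorem stmt_18 (n m : ℕ) (hn : 1 ≤ n) (hm : 2 ≤ m) (s B ξ : ℝ) (hs : 0 < s) (hB : 0 < B) :
    (2 * Real.pi ^ (((m : ℝ) - 1) / 2) / Real.Gamma (((m : ℝ) - 1) / 2)) *
        ∫ r in Set.Ioi |ξ|,
          (B + 16 * r ^ 2) ^ (-(((n : ℝ) + m + s) / 2)) *
            (r ^ 2 - ξ ^ 2) ^ (((m : ℝ) - 3) / 2) * r
      = (Real.pi ^ (((m : ℝ) - 1) / 2) / 4 ^ (m - 1)) *
          (Real.Gamma (((n : ℝ) + 1 + s) / 2) / Real.Gamma (((n : ℝ) + m + s) / 2)) *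
          (B + 16 * ξ ^ 2) ^ (-(((n : ℝ) + 1 + s) / 2)) := by
  have hm' : (2:ℝ) ≤ (m:ℝ) := by exact_mod_cast hm
  have hn' : (1:ℝ) ≤ (n:ℝ) := by exact_mod_cast hn
  set q : ℝ := ((m:ℝ) - 1) / 2 with hqdef
  set p : ℝ := ((n:ℝ) + m + s) / 2 with hpdef
  set t : ℝ := ((n:ℝ) + 1 + s) / 2 with htdef
  set A : ℝ := B + 16 * ξ^2 with hAdef
  have hq : 0 < q := by rw [hqdef]; linarith
  have ht : 0 < t := by rw [htdef]; linarith
  have hpq : p - q = t := by rw [hpdef, hqdef, htdef]; ring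
  have hqp : q - p = -t := by rw [← hpq]; ring
  have hA : 0 < A := by rw [hAdef]; positivity
  have hI : (∫ r in Set.Ioi |ξ|,
        (B + 16 * r ^ 2) ^ (-p) * (r ^ 2 - ξ ^ 2) ^ (((m:ℝ) - 3) / 2) * r)
      = (1/2) * ∫ u in Set.Ioi (0:ℝ), (A + 16*u) ^ (-p) * u ^ (q-1) := by
    rw [radial_sub ξ (fun u => (A + 16*u) ^ (-p) * u ^ (q-1)), ← MeasureTheory.integral_const_mul]
    refine setIntegral_congr_fun measurableSet_Ioi fun r _ => ?_
    have h1 : A + 16*(r^2 - ξ^2) = B + 16*r^2 := by rw [hAdef]; ring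
    have h2 : ((m:ℝ) - 3) / 2 = q - 1 := by rw [hqdef]; ring
    simp only [h1, h2]
    ring
  rw [hI, beta_Ioi hA hq (by rw [hpq]; exact ht), hpq, hqp]
  have h16 : (16:ℝ) ^ (-q) = ((4:ℝ) ^ (m - 1 : ℕ))⁻¹ := by
    have hc : ((m - 1 : ℕ) : ℝ) = (m:ℝ) - 1 := by
      push_cast [Nat.cast_sub (le_trans one_le_two hm)]; ring
    rw [show (16:ℝ) = (4:ℝ) ^ (2:ℝ) by
        rw [show (2:ℝ) = ((2:ℕ):ℝ) by norm_num, Real.rpow_natCast]; norm_num,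
      ← Real.rpow_mul (by norm_num : (0:ℝ) ≤ 4),
      show (2:ℝ) * (-q) = -((m:ℝ) - 1) by rw [hqdef]; ring,
      Real.rpow_neg (by norm_num : (0:ℝ) ≤ 4), ← hc, Real.rpow_natCast]
  rw [h16]
  have hGq : Real.Gamma q ≠ 0 := (Real.Gamma_pos_of_pos hq).ne'
  have h4 : ((4:ℝ) ^ (m - 1 : ℕ)) ≠ 0 := by positivity
  field_simp
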